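/- Let (F, Ψ₊, Ψ₋) be an SU(3)-structure on M⁶ and define on M⁶ × (0,π) the 3-form φ = sin²q F∧dq - sin³q(-cos q Ψ₊ + sin q Ψ₋) and the 4-form *φ = ½ sin⁴q F∧F + sin³q(sin q Ψ₊ + cos q Ψ₋)∧dq. Then dφ = 4*φ holds if and only if dF = 3Ψ₊ and dΨ₋ = -2F∧F. -/

import Mathlib

open Real

variable {A : Type*}

/-- A form on `M⁶ × ℝ` is a pair `(α, β)` of `q`-dependent forms on `M⁶`, standing for
`α(q) + β(q) ∧ dq`.  `dProd d k` is the exterior derivative on the product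
(`k` = degree of the `dq`-free part): `d(α + β∧dq) = dα + ((-1)^k ∂_qα + dβ) ∧ dq`. -/
noncomputable def dProd [NormedRing A] [NormedAlgebra ℝ A] (d : A →ₗ[ℝ] A) (k : ℕ)
    (ω : (ℝ → A) × (ℝ → A)) : (ℝ → A) × (ℝ → A) :=
  (fun q => d (ω.1 q), fun q => ((-1 : ℝ)) ^ k • deriv ω.1 q + d (ω.2 q))

/-- For an SU(3)-structure `(F, Ψ₊, Ψ₋)` on `M⁶` define on `M⁶ × (0,π)` the
3-form `φ = sin²q F∧dq - sin³q(-cos q Ψ₊ + sin q Ψ₋)` and the 4-form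
`*φ = ½ sin⁴q F∧F + sin³q(sin q Ψ₊ + cos q Ψ₋)∧dq`.  Then `dφ = 4*φ` if and only if
`dF = 3Ψ₊` and `dΨ₋ = -2F∧F`: an SU(3)-manifold is nearly Kähler iff its sin-cone
G₂-structure is nearly parallel. -/
theorem sinCone_nearlyParallelG2_iff_nearlyKaehler [NormedRing A] [NormedAlgebra ℝ A]
    (d : A →ₗ[ℝ] A) (F Ψp Ψm : A)
    (hdd : ∀ x : A, d (d x) = 0)
    -- SU(3)-compatibility: F ∧ Ψ± = 0
    (hFp : F * Ψp = 0) (hFm : F * Ψm = 0) :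
    ((∀ q ∈ Set.Ioo (0 : ℝ) π,
        (dProd d 3
          (fun s => -(sin s ^ 3) • (-(cos s) • Ψp + sin s • Ψm),
           fun s => sin s ^ 2 • F)).1 q
          = (4 : ℝ) • (((1 : ℝ) / 2 * sin q ^ 4) • (F * F)) ∧
        (dProd d 3
          (fun s => -(sin s ^ 3) • (-(cos s) • Ψp + sin s • Ψm),
           fun s => sin s ^ 2 • F)).2 q
          = (4 : ℝ) • (sin q ^ 3 • (sin q • Ψp + cos q • Ψm))) ↔
      (d F = (3 : ℝ) • Ψp ∧ d Ψm = (-2 : ℝ) • (F * F))) := by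
  
  have hfun : (fun s : ℝ => -(sin s ^ 3) • (-(cos s) • Ψp + sin s • Ψm))
      = fun s => (sin s ^ 3 * cos s) • Ψp + (-(sin s ^ 4)) • Ψm := by
    funext s; module
  have hderiv : ∀ q : ℝ,
      deriv (fun s : ℝ => (sin s ^ 3 * cos s) • Ψp + (-(sin s ^ 4)) • Ψm) q
      = (3 * sin q ^ 2 * cos q ^ 2 - sin q ^ 4) • Ψp + (-(4 * sin q ^ 3 * cos q)) • Ψm := by
    intro q
    have h1 : HasDerivAt (fun s : ℝ => sin s ^ 3 * cos s)
        (3 * sin q ^ 2 * cos q ^ 2 - sin q ^ 4) q := by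
      have := ((Real.hasDerivAt_sin q).fun_pow 3).fun_mul (Real.hasDerivAt_cos q)
      exact this.congr_deriv (by ring)
    have h2 : HasDerivAt (fun s : ℝ => -(sin s ^ 4)) (-(4 * sin q ^ 3 * cos q)) q := by
      have := ((Real.hasDerivAt_sin q).fun_pow 4).fun_neg
      exact this.congr_deriv (by ring)
    exact ((h1.smul_const Ψp).add (h2.smul_const Ψm)).deriv
  simp only [dProd, hfun, hderiv, map_add, map_smul]
  constructor
  · intro h
    obtain ⟨eq1, eq2⟩ := h (π/2) ⟨by positivity, by linarith [pi_pos]⟩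
    simp [sin_pi_div_two, cos_pi_div_two] at eq1 eq2
    constructor
    · linear_combination (norm := module) eq2
    · linear_combination (norm := module) -eq1
  · rintro ⟨h1, h2⟩ q hq
    have hΨp : d Ψp = 0 := by
      have h := hdd F
      rw [h1, map_smul, smul_eq_zero] at h
      rcases h with h | h
      · norm_num at h
      · exact h
    rw [h1, h2, hΨp]
    constructor
    · match_scalars <;> ring
    · have key := sin_sq_add_cos_sq q
      match_scalars <;>
        first
          | ring1
          | linear_combination (-6 : ℝ) * sin q ^ 2 * key
          | linear_combination (-3 : ℝ) * sin q ^ 2 * key
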